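/- arXiv:1310.3779 — 3 statements merged into one kernel-verified Lean document; each statement's English description precedes it below -/
import Mathlib

section
/- Let (X, λ) be a finite measure space and let (u_n) be a sequence of integrable functions u_n : X → ℝ with sup_n ∫_X |u_n| dλ < +∞, and let u : X → ℝ be integrable. Set f_n(z, ξ) = 1_{u_n(z) > ξ} and f(z, ξ) = 1_{u(z) > ξ}. Assume that f_n → f in the weak-* topology of L^∞(X × ℝ), i.e. for every g ∈ L^1(X × ℝ), ∫_X ∫_ℝ f_n(z,ξ) g(z,ξ) dξ dλ(z) → ∫_X ∫_ℝ f(z,ξ) g(z,ξ) dξ dλ(z). Assume moreover the equi-integrability condition: sup_n ∫_X (u_n − k)^+ dλ → 0 and sup_n ∫_X (u_n + k)^− dλ → 0 as k → +∞. Then u_n → u strongly in L^1(X). -/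
open MeasureTheory Filter Topology

private lemma indicator_eq_aux (k s : ℝ) :
    (fun ξ : ℝ => (if s > ξ then (1:ℝ) else 0) * (Set.Ioo (-k) k).indicator (fun _ => (1:ℝ)) ξ)
      = (Set.Ioo (-k) (min s k)).indicator (fun _ => (1:ℝ)) := by
  funext ξ
  by_cases h1 : ξ < s <;> by_cases h2 : -k < ξ <;> by_cases h3 : ξ < k <;>
    simp [Set.indicator_apply, Set.mem_Ioo, lt_min_iff, h1, h2, h3]

private lemma inner_one (k s : ℝ) :
    (∫ ξ : ℝ, (if s > ξ then (1:ℝ) else 0) * (Set.Ioo (-k) k).indicator (fun _ => (1:ℝ)) ξ)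
      = max (min s k) (-k) + k := by
  rw [indicator_eq_aux k s, MeasureTheory.integral_indicator_const (1:ℝ) measurableSet_Ioo,
    Real.volume_real_Ioo, smul_eq_mul, mul_one]
  rcases le_total (min s k) (-k) with h | h
  · rw [max_eq_right h, max_eq_right (by linarith)]; ring
  · rw [max_eq_left h, max_eq_left (by linarith)]; ring

private lemma inner_two (k s t : ℝ) :
    (∫ ξ : ℝ, (if s > ξ then (1:ℝ) else 0) *
        ((if t > ξ then (1:ℝ) else 0) * (Set.Ioo (-k) k).indicator (fun _ => (1:ℝ)) ξ))
      = max (min (min s t) k) (-k) + k := by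
  rw [← inner_one k (min s t)]
  apply integral_congr_ae
  filter_upwards with ξ
  by_cases h1 : s > ξ <;> by_cases h2 : t > ξ <;> simp [h1, h2, lt_min_iff]

private lemma abs_min_sub (x y : ℝ) : |x - y| = x + y - 2 * min x y := by
  rcases le_total x y with h | h
  · rw [abs_of_nonpos (by linarith), min_eq_left h]; ring
  · rw [abs_of_nonneg (by linarith), min_eq_right h]; ring

private lemma clamp_abs_eq (k a b : ℝ) :
    |max (min a k) (-k) - max (min b k) (-k)|
      = (max (min a k) (-k) + k) + (max (min b k) (-k) + k)
        - 2 * (max (min (min a b) k) (-k) + k) := by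
  have hmin : min (max (min a k) (-k)) (max (min b k) (-k)) = max (min (min a b) k) (-k) := by
    rcases le_total a b with h | h
    · rw [min_eq_left (max_le_max (min_le_min h le_rfl) le_rfl), min_eq_left h]
    · rw [min_eq_right (max_le_max (min_le_min h le_rfl) le_rfl), min_eq_right h]
  rw [abs_min_sub, hmin]; ring

private lemma decomp (k a : ℝ) (hk : 0 ≤ k) :
    a = max (min a k) (-k) + max (a - k) 0 - max (-(a+k)) 0 := by
  rcases le_total a k with h1 | h1 <;> rcases le_total a (-k) with h2 | h2 <;>
    simp [min_def, max_def] <;> split_ifs <;> linarith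

private lemma pt_bound (k a b : ℝ) (hk : 0 ≤ k) :
    |a - b| ≤ |max (min a k) (-k) - max (min b k) (-k)|
      + max (a - k) 0 + max (-(a+k)) 0 + max (b - k) 0 + max (-(b+k)) 0 := by
  have ha := decomp k a hk
  have hb := decomp k b hk
  have h1 : a - b = (max (min a k) (-k) - max (min b k) (-k))
      + ((max (a-k) 0 - max (b-k) 0) - (max (-(a+k)) 0 - max (-(b+k)) 0)) := by linarith
  have h2 : |a - b| ≤ |max (min a k) (-k) - max (min b k) (-k)|
      + |(max (a-k) 0 - max (b-k) 0) - (max (-(a+k)) 0 - max (-(b+k)) 0)| := by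
    rw [h1]; exact abs_add_le _ _
  have h3 : |(max (a-k) 0 - max (b-k) 0) - (max (-(a+k)) 0 - max (-(b+k)) 0)|
      ≤ |max (a-k) 0 - max (b-k) 0| + |max (-(a+k)) 0 - max (-(b+k)) 0| := abs_sub _ _
  have h4 : |max (a-k) 0 - max (b-k) 0| ≤ max (a-k) 0 + max (b-k) 0 := by
    refine (abs_sub _ _).trans ?_
    rw [abs_of_nonneg (le_max_right _ _), abs_of_nonneg (le_max_right _ _)]
  have h5 : |max (-(a+k)) 0 - max (-(b+k)) 0| ≤ max (-(a+k)) 0 + max (-(b+k)) 0 := by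
    refine (abs_sub _ _).trans ?_
    rw [abs_of_nonneg (le_max_right _ _), abs_of_nonneg (le_max_right _ _)]
  linarith

/-- Weak-* convergence of equilibrium kinetic functions
`f_n(z,ξ) = 1_{u_n(z)>ξ}` to the equilibrium `f(z,ξ) = 1_{u(z)>ξ}`, together with
equi-integrability of `(u_n)`, implies strong `L¹` convergence `u_n → u`. -/
theorem kinetic_weak_to_strong_L1 {X : Type*} [MeasurableSpace X]
    (lam : Measure X) [IsFiniteMeasure lam]
    (uN : ℕ → X → ℝ) (u : X → ℝ)
    (huN : ∀ j, Integrable (uN j) lam) (hu : Integrable u lam)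
    (hbound : ∃ C : ℝ, ∀ j, (∫ z, |uN j z| ∂lam) ≤ C)
    (hweak : ∀ g : X × ℝ → ℝ, Integrable g (lam.prod volume) →
      Tendsto
        (fun j => ∫ z, (∫ ξ : ℝ, (if uN j z > ξ then (1 : ℝ) else 0) * g (z, ξ)) ∂lam)
        atTop
        (𝓝 (∫ z, (∫ ξ : ℝ, (if u z > ξ then (1 : ℝ) else 0) * g (z, ξ)) ∂lam)))
    (hequi : ∀ ε : ℝ, 0 < ε → ∃ k₀ : ℝ, ∀ k : ℝ, k₀ ≤ k → ∀ j,
      (∫ z, max (uN j z - k) 0 ∂lam) ≤ ε ∧ (∫ z, max (-(uN j z + k)) 0 ∂lam) ≤ ε) :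
    Tendsto (fun j => ∫ z, |uN j z - u z| ∂lam) atTop (𝓝 0) := by
  rw [NormedAddCommGroup.tendsto_nhds_zero]
  intro ε hε
  -- measurable representative of u
  set u' : X → ℝ := hu.1.mk u with hu'def
  have hu'm : StronglyMeasurable u' := hu.1.stronglyMeasurable_mk
  have hu'ae : u =ᵐ[lam] u' := hu.1.ae_eq_mk
  -- choose k
  obtain ⟨k₀, hk₀⟩ := hequi (ε/8) (by linarith)
  have hutail : Tendsto (fun m : ℕ => ∫ z, max (|u z| - (m:ℝ)) 0 ∂lam) atTop (𝓝 0) := by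
    have hDCT := tendsto_integral_of_dominated_convergence (μ := lam)
      (F := fun (n : ℕ) z => max (|u z| - (n:ℝ)) 0) (f := fun _ => (0:ℝ)) (fun z => |u z|)
      (fun n => ((hu.abs.aemeasurable.sub aemeasurable_const).max
        aemeasurable_const).aestronglyMeasurable)
      hu.abs
      (fun n => by
        filter_upwards with z
        rw [Real.norm_eq_abs, abs_of_nonneg (le_max_right _ _)]
        exact max_le (by linarith [Nat.cast_nonneg (α := ℝ) n]) (abs_nonneg _))
      (by
        filter_upwards with z
        have hev : (fun n : ℕ => max (|u z| - (n:ℝ)) 0) =ᶠ[atTop] fun _ => (0:ℝ) := by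
          filter_upwards [eventually_ge_atTop ⌈|u z|⌉₊] with n hn
          have : |u z| ≤ (n:ℝ) := (Nat.le_ceil _).trans (Nat.cast_le.2 hn)
          exact max_eq_right (by linarith)
        exact Filter.Tendsto.congr' hev.symm tendsto_const_nhds)
    simpa using hDCT
  obtain ⟨m, hm⟩ : ∃ m : ℕ, (∫ z, max (|u z| - (m:ℝ)) 0 ∂lam) < ε/8 :=
    (hutail.eventually_lt_const (by linarith)).exists
  set k : ℝ := max (m : ℝ) (max k₀ 1) with hk_def
  have hk1 : (1:ℝ) ≤ k := le_max_of_le_right (le_max_right _ _)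
  have hk0 : (0:ℝ) ≤ k := by linarith
  have hkk₀ : k₀ ≤ k := le_max_of_le_right (le_max_left _ _)
  have hkm : (m:ℝ) ≤ k := le_max_left _ _
  -- the test functions
  have hIoo : (lam.prod volume) (Set.univ ×ˢ Set.Ioo (-k) k) < ⊤ := by
    rw [Measure.prod_prod]
    exact ENNReal.mul_lt_top (measure_lt_top _ _)
      (by rw [Real.volume_Ioo]; exact ENNReal.ofReal_lt_top)
  set G₀ : X × ℝ → ℝ := fun p => (Set.Ioo (-k) k).indicator (fun _ => (1:ℝ)) p.2 with hG₀def
  have hG₀int : Integrable G₀ (lam.prod volume) := by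
    have hEq : G₀ = (Set.univ ×ˢ Set.Ioo (-k) k).indicator (fun _ => (1:ℝ)) := by
      funext p
      by_cases h : -k < p.2 ∧ p.2 < k <;>
        simp [hG₀def, Set.indicator_apply, Set.mem_prod, Set.mem_Ioo, h]
    rw [hEq]
    exact ((integrableOn_const_iff (C := (1:ℝ))).mpr (Or.inr hIoo)).integrable_indicator
      (MeasurableSet.univ.prod measurableSet_Ioo)
  set G₂ : X × ℝ → ℝ := fun p =>
      (if u' p.1 > p.2 then (1:ℝ) else 0) * (Set.Ioo (-k) k).indicator (fun _ => (1:ℝ)) p.2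
    with hG₂def
  have hG₂int : Integrable G₂ (lam.prod volume) := by
    have hset : MeasurableSet {p : X × ℝ | p.2 < u' p.1} :=
      measurableSet_lt measurable_snd (hu'm.measurable.comp measurable_fst)
    have hEq : G₂ = ({p : X × ℝ | p.2 < u' p.1} ∩ Set.univ ×ˢ Set.Ioo (-k) k).indicator
        (fun _ => (1:ℝ)) := by
      funext p
      by_cases h1 : p.2 < u' p.1 <;> by_cases h2 : -k < p.2 ∧ p.2 < k <;>
        simp [hG₂def, Set.indicator_apply, Set.mem_prod, Set.mem_Ioo, Set.mem_setOf_eq,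
          gt_iff_lt, h1, h2]
    rw [hEq]
    exact ((integrableOn_const_iff (C := (1:ℝ))).mpr
        (Or.inr (lt_of_le_of_lt (measure_mono Set.inter_subset_right) hIoo))).integrable_indicator
      (hset.inter (MeasurableSet.univ.prod measurableSet_Ioo))
  -- rewrite the weak convergence statements
  have key0 : ∀ (s : ℝ) (z : X),
      (∫ ξ : ℝ, (if s > ξ then (1:ℝ) else 0) * G₀ (z, ξ)) = max (min s k) (-k) + k :=
    fun s _ => inner_one k s
  have key2 : ∀ (s : ℝ) (z : X),
      (∫ ξ : ℝ, (if s > ξ then (1:ℝ) else 0) * G₂ (z, ξ))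
        = max (min (min s (u' z)) k) (-k) + k :=
    fun s z => inner_two k s (u' z)
  have H0 := hweak G₀ hG₀int
  simp only [key0] at H0
  have H2 := hweak G₂ hG₂int
  simp only [key2] at H2
  have Heq : ∀ v : X → ℝ,
      (∫ z, (max (min (min (v z) (u' z)) k) (-k) + k) ∂lam)
        = ∫ z, (max (min (min (v z) (u z)) k) (-k) + k) ∂lam := by
    intro v
    apply integral_congr_ae
    filter_upwards [hu'ae] with z hz
    rw [← hz]
  simp only [Heq, min_self] at H2
  -- integrability of clamped functions
  have iClamp0 : ∀ v : X → ℝ, AEMeasurable v lam →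
      Integrable (fun z => max (min (v z) k) (-k)) lam := by
    intro v hv
    refine (integrable_const k).mono'
      (((hv.min aemeasurable_const).max aemeasurable_const).aestronglyMeasurable) ?_
    filter_upwards with z
    rw [Real.norm_eq_abs, abs_le]
    exact ⟨neg_le.mp (neg_le.mp (by simpa using le_max_right (min (v z) k) (-k))),
      max_le ((min_le_right _ _)) (by linarith)⟩
  have iClamp : ∀ v : X → ℝ, AEMeasurable v lam →
      Integrable (fun z => max (min (v z) k) (-k) + k) lam :=
    fun v hv => (iClamp0 v hv).add (integrable_const k)
  -- the combined limit
  have T : Tendsto (fun j =>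
      (∫ z, (max (min (uN j z) k) (-k) + k) ∂lam)
        + (∫ z, (max (min (u z) k) (-k) + k) ∂lam)
        - 2 * (∫ z, (max (min (min (uN j z) (u z)) k) (-k) + k) ∂lam)) atTop (𝓝 0) := by
    have hc : Tendsto (fun _ : ℕ => (∫ z, (max (min (u z) k) (-k) + k) ∂lam)) atTop
        (𝓝 (∫ z, (max (min (u z) k) (-k) + k) ∂lam)) := tendsto_const_nhds
    have h := (H0.add hc).sub (H2.const_mul 2)
    have hz : (∫ z, (max (min (u z) k) (-k) + k) ∂lam)
        + (∫ z, (max (min (u z) k) (-k) + k) ∂lam)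
        - 2 * (∫ z, (max (min (u z) k) (-k) + k) ∂lam) = 0 := by ring
    rwa [hz] at h
  have TD : Tendsto (fun j =>
      ∫ z, |max (min (uN j z) k) (-k) - max (min (u z) k) (-k)| ∂lam) atTop (𝓝 0) := by
    apply T.congr
    intro j
    have i1 := iClamp (uN j) (huN j).aemeasurable
    have i2 := iClamp u hu.aemeasurable
    have i3 := iClamp (fun z => min (uN j z) (u z)) ((huN j).aemeasurable.min hu.aemeasurable)
    have i12 : Integrable (fun z => (max (min (uN j z) k) (-k) + k)
        + (max (min (u z) k) (-k) + k)) lam := i1.add i2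
    have i3' : Integrable (fun z => 2 * (max (min (min (uN j z) (u z)) k) (-k) + k)) lam :=
      i3.const_mul 2
    have hEq : (fun z => |max (min (uN j z) k) (-k) - max (min (u z) k) (-k)|)
        = fun z => (max (min (uN j z) k) (-k) + k) + (max (min (u z) k) (-k) + k)
            - 2 * (max (min (min (uN j z) (u z)) k) (-k) + k) :=
      funext fun z => clamp_abs_eq k (uN j z) (u z)
    calc (∫ z, (max (min (uN j z) k) (-k) + k) ∂lam)
        + (∫ z, (max (min (u z) k) (-k) + k) ∂lam)
        - 2 * (∫ z, (max (min (min (uN j z) (u z)) k) (-k) + k) ∂lam)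
        = ∫ z, ((max (min (uN j z) k) (-k) + k) + (max (min (u z) k) (-k) + k)
            - 2 * (max (min (min (uN j z) (u z)) k) (-k) + k)) ∂lam := by
          rw [integral_sub i12 i3', integral_add i1 i2, integral_const_mul]
      _ = ∫ z, |max (min (uN j z) k) (-k) - max (min (u z) k) (-k)| ∂lam := by
          rw [← hEq]
  -- tails of u
  have iTm : Integrable (fun z => max (|u z| - (m:ℝ)) 0) lam :=
    (hu.abs.sub (integrable_const _)).pos_part
  have iT3 : Integrable (fun z => max (u z - k) 0) lam :=
    (hu.sub (integrable_const k)).pos_part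
  have iT4 : Integrable (fun z => max (-(u z + k)) 0) lam :=
    ((hu.add (integrable_const k)).neg).pos_part
  have hT3 : (∫ z, max (u z - k) 0 ∂lam) ≤ ε/8 := by
    refine le_trans (integral_mono iT3 iTm fun z => ?_) hm.le
    exact max_le_max (by linarith [le_abs_self (u z)]) le_rfl
  have hT4 : (∫ z, max (-(u z + k)) 0 ∂lam) ≤ ε/8 := by
    refine le_trans (integral_mono iT4 iTm fun z => ?_) hm.le
    exact max_le_max (by linarith [neg_abs_le (u z)]) le_rfl
  -- conclusion
  filter_upwards [TD.eventually_lt_const (show (0:ℝ) < ε/2 by linarith)] with j hj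
  rw [Real.norm_eq_abs, abs_of_nonneg (integral_nonneg fun z => abs_nonneg _)]
  have iT1 : Integrable (fun z => max (uN j z - k) 0) lam :=
    ((huN j).sub (integrable_const k)).pos_part
  have iT2 : Integrable (fun z => max (-(uN j z + k)) 0) lam :=
    (((huN j).add (integrable_const k)).neg).pos_part
  have iD : Integrable (fun z => |max (min (uN j z) k) (-k) - max (min (u z) k) (-k)|) lam :=
    ((iClamp0 (uN j) (huN j).aemeasurable).sub (iClamp0 u hu.aemeasurable)).abs
  have hT1 := (hk₀ k hkk₀ j).1
  have hT2 := (hk₀ k hkk₀ j).2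
  have hle : (∫ z, |uN j z - u z| ∂lam)
      ≤ ∫ z, (|max (min (uN j z) k) (-k) - max (min (u z) k) (-k)|
          + max (uN j z - k) 0 + max (-(uN j z + k)) 0
          + max (u z - k) 0 + max (-(u z + k)) 0) ∂lam :=
    integral_mono (((huN j).sub hu).abs)
      ((((iD.add iT1).add iT2).add iT3).add iT4)
      (fun z => pt_bound k (uN j z) (u z) hk0)
  have iS2 : Integrable (fun z => |max (min (uN j z) k) (-k) - max (min (u z) k) (-k)|
      + max (uN j z - k) 0) lam := iD.add iT1
  have iS3 : Integrable (fun z => |max (min (uN j z) k) (-k) - max (min (u z) k) (-k)|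
      + max (uN j z - k) 0 + max (-(uN j z + k)) 0) lam := iS2.add iT2
  have iS4 : Integrable (fun z => |max (min (uN j z) k) (-k) - max (min (u z) k) (-k)|
      + max (uN j z - k) 0 + max (-(uN j z + k)) 0 + max (u z - k) 0) lam := iS3.add iT3
  rw [integral_add iS4 iT4, integral_add iS3 iT3, integral_add iS2 iT2,
    integral_add iD iT1] at hle
  linarith
end

section
/- Let (X, λ) be a finite measure space, R > 0, and let (u_n) be a sequence of measurable functions u_n : X → ℝ with |u_n| ≤ R λ-a.e. for all n, and u : X → ℝ measurable with |u| ≤ R λ-a.e. Assume that for every g ∈ L^1(X × ℝ), ∫_X ∫_ℝ 1_{u_n(z) > ξ} g(z,ξ) dξ dλ(z) → ∫_X ∫_ℝ 1_{u(z) > ξ} g(z,ξ) dξ dλ(z). Then u_n → u strongly in L^2(X); in particular u_n ⇀ u weakly in L^2(X) and ‖u_n‖_{L^2(X)} → ‖u‖_{L^2(X)}. -/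
open MeasureTheory Filter Topology

private lemma inner_int {R a : ℝ} (ha : -R ≤ a) (haR : a ≤ R) :
    ∫ ξ : ℝ, (if a > ξ then (1 : ℝ) else 0) * (Set.Ioo (-R) R).indicator (fun _ => (1:ℝ)) ξ
      = a + R := by
  have h : (fun ξ : ℝ => (if a > ξ then (1 : ℝ) else 0)
        * (Set.Ioo (-R) R).indicator (fun _ => (1:ℝ)) ξ)
      = (Set.Ioo (-R) a).indicator (fun _ => (1:ℝ)) := by
    funext ξ
    have : ξ ∈ Set.Ioo (-R) a ↔ (a > ξ ∧ ξ ∈ Set.Ioo (-R) R) := by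
      simp only [Set.mem_Ioo]; constructor
      · rintro ⟨h1, h2⟩; exact ⟨h2, h1, by linarith⟩
      · rintro ⟨h1, h2, h3⟩; exact ⟨h2, h1⟩
    by_cases hmem : ξ ∈ Set.Ioo (-R) a
    · obtain ⟨h1, h2⟩ := this.mp hmem
      simp [Set.indicator_of_mem, hmem, h1, Set.indicator_of_mem h2]
    · rw [Set.indicator_of_notMem hmem]
      by_cases h1 : a > ξ
      · have h2 : ξ ∉ Set.Ioo (-R) R := fun h2 => hmem (this.mpr ⟨h1, h2⟩)
        simp [Set.indicator_of_notMem h2]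
      · simp [h1]
  rw [h, integral_indicator measurableSet_Ioo]
  simp [Real.volume_Ioo, ENNReal.toReal_ofReal (by linarith : (0:ℝ) ≤ a - -R)]
  linarith

private lemma inner_int2 {R a b : ℝ} (ha : -R ≤ a) (haR : a ≤ R) (hb : -R ≤ b) :
    ∫ ξ : ℝ, (if a > ξ then (1 : ℝ) else 0) *
      ((if b > ξ then (1 : ℝ) else 0) * (Set.Ioo (-R) R).indicator (fun _ => (1:ℝ)) ξ)
      = min a b + R := by
  have h : (fun ξ : ℝ => (if a > ξ then (1 : ℝ) else 0) *
      ((if b > ξ then (1 : ℝ) else 0) * (Set.Ioo (-R) R).indicator (fun _ => (1:ℝ)) ξ))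
      = fun ξ : ℝ => (if min a b > ξ then (1 : ℝ) else 0)
          * (Set.Ioo (-R) R).indicator (fun _ => (1:ℝ)) ξ := by
    funext ξ
    by_cases h1 : a > ξ <;> by_cases h2 : b > ξ <;> simp [h1, h2, lt_min_iff]
  rw [h, inner_int (le_min ha hb) ((min_le_left a b).trans haR)]

private lemma integrable_of_abs_bound {X : Type*} [MeasurableSpace X] {lam : Measure X}
    [IsFiniteMeasure lam] {f : X → ℝ} {C : ℝ} (hm : Measurable f)
    (hb : ∀ᵐ z ∂lam, |f z| ≤ C) : Integrable f lam :=
  memLp_one_iff_integrable.mp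
    (MemLp.of_bound hm.aestronglyMeasurable C (by simpa [Real.norm_eq_abs] using hb))

/-- For uniformly bounded `u_n`, `u`, weak-* convergence of the equilibrium
kinetic functions `1_{u_n>ξ} → 1_{u>ξ}` implies strong `L²` convergence `u_n → u`; in
particular `u_n ⇀ u` weakly in `L²` and the `L²` norms converge. -/
theorem kinetic_weak_to_strong_L2_bounded {X : Type*} [MeasurableSpace X]
    (lam : Measure X) [IsFiniteMeasure lam]
    (R : ℝ) (hR : 0 < R) (uN : ℕ → X → ℝ) (u : X → ℝ)
    (huNm : ∀ j, Measurable (uN j)) (hum : Measurable u)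
    (huNb : ∀ j, ∀ᵐ z ∂lam, |uN j z| ≤ R) (hub : ∀ᵐ z ∂lam, |u z| ≤ R)
    (hweak : ∀ g : X × ℝ → ℝ, Integrable g (lam.prod volume) →
      Tendsto
        (fun j => ∫ z, (∫ ξ : ℝ, (if uN j z > ξ then (1 : ℝ) else 0) * g (z, ξ)) ∂lam)
        atTop
        (𝓝 (∫ z, (∫ ξ : ℝ, (if u z > ξ then (1 : ℝ) else 0) * g (z, ξ)) ∂lam))) :
    Tendsto (fun j => ∫ z, |uN j z - u z| ^ 2 ∂lam) atTop (𝓝 0) ∧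
    (∀ φ : X → ℝ, MemLp φ 2 lam →
      Tendsto (fun j => ∫ z, uN j z * φ z ∂lam) atTop (𝓝 (∫ z, u z * φ z ∂lam))) ∧
    Tendsto (fun j => ∫ z, (uN j z) ^ 2 ∂lam) atTop (𝓝 (∫ z, (u z) ^ 2 ∂lam)) := by
  classical
  set S : Set ℝ := Set.Ioo (-R) R with hS
  -- test functions
  set g₁ : X × ℝ → ℝ := fun p => S.indicator (fun _ => (1:ℝ)) p.2 with hg₁def
  set g₂ : X × ℝ → ℝ := fun p => (if u p.1 > p.2 then (1:ℝ) else 0) * g₁ p with hg₂def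
  have hSmeas : MeasurableSet S := measurableSet_Ioo
  have hpre : MeasurableSet ((Prod.snd : X × ℝ → ℝ) ⁻¹' S) := measurable_snd hSmeas
  have hfin : (lam.prod volume) ((Prod.snd : X × ℝ → ℝ) ⁻¹' S) < ⊤ := by
    have : (Prod.snd : X × ℝ → ℝ) ⁻¹' S = Set.univ ×ˢ S := by
      ext p; simp [Set.mem_prod]
    rw [this, Measure.prod_prod]
    exact ENNReal.mul_lt_top (measure_lt_top _ _) (by simp [hS, Real.volume_Ioo])
  have hg₁int : Integrable g₁ (lam.prod volume) := by
    have : g₁ = ((Prod.snd : X × ℝ → ℝ) ⁻¹' S).indicator (fun _ => (1:ℝ)) := by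
      funext p; simp [hg₁def, Set.indicator_apply]
    rw [this, integrable_indicator_iff hpre]
    exact integrableOn_const hfin.ne
  have hg₂meas : Measurable g₂ := by
    have h1 : MeasurableSet {p : X × ℝ | p.2 < u p.1} :=
      measurableSet_lt measurable_snd (hum.comp measurable_fst)
    exact ((measurable_const.ite h1 measurable_const)).mul
      ((measurable_const.indicator hSmeas).comp measurable_snd)
  have hg₂int : Integrable g₂ (lam.prod volume) := by
    refine hg₁int.mono' hg₂meas.aestronglyMeasurable ?_
    refine Eventually.of_forall fun p => ?_
    rw [Real.norm_eq_abs, abs_mul]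
    have h1 : |(if u p.1 > p.2 then (1:ℝ) else 0)| ≤ 1 := by split_ifs <;> norm_num
    have h2 : (0:ℝ) ≤ g₁ p := Set.indicator_nonneg (fun _ _ => zero_le_one) _
    calc |(if u p.1 > p.2 then (1:ℝ) else 0)| * |g₁ p| ≤ 1 * |g₁ p| :=
          mul_le_mul_of_nonneg_right h1 (abs_nonneg _)
      _ = g₁ p := by rw [one_mul, abs_of_nonneg h2]
  -- the three affine integrals
  set P : ℕ → ℝ := fun j => ∫ z, (uN j z + R) ∂lam with hP
  set Q : ℝ := ∫ z, (u z + R) ∂lam with hQ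
  set M : ℕ → ℝ := fun j => ∫ z, (min (uN j z) (u z) + R) ∂lam with hM
  -- integrabilities
  have intuj : ∀ j, Integrable (uN j) lam := fun j =>
    integrable_of_abs_bound (huNm j) (huNb j)
  have intu : Integrable u lam := integrable_of_abs_bound hum hub
  have intmin : ∀ j, Integrable (fun z => min (uN j z) (u z)) lam := fun j =>
    integrable_of_abs_bound ((huNm j).min hum) (by
      filter_upwards [huNb j, hub] with z h1 h2
      rw [abs_le] at h1 h2 ⊢
      exact ⟨le_min h1.1 h2.1, (min_le_left _ _).trans h1.2⟩)
  have intR : Integrable (fun _ : X => R) lam := integrable_const R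
  -- rewrite the weak convergence hypotheses
  have hw1 : Tendsto P atTop (𝓝 Q) := by
    have key : ∀ (v : X → ℝ), (∀ᵐ z ∂lam, |v z| ≤ R) →
        ∫ z, (∫ ξ : ℝ, (if v z > ξ then (1 : ℝ) else 0) * g₁ (z, ξ)) ∂lam
          = ∫ z, (v z + R) ∂lam := by
      intro v hv
      refine integral_congr_ae ?_
      filter_upwards [hv] with z hz
      have := abs_le.mp hz
      simpa [hg₁def] using inner_int (R := R) (a := v z) (by linarith [this.1]) this.2
    have := hweak g₁ hg₁int
    rwa [key u hub, show (fun j => ∫ z, (∫ ξ : ℝ, (if uN j z > ξ then (1 : ℝ) else 0) *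
        g₁ (z, ξ)) ∂lam) = P from funext fun j => key (uN j) (huNb j)] at this
  have hw2 : Tendsto M atTop (𝓝 Q) := by
    have keyj : ∀ j, ∫ z, (∫ ξ : ℝ, (if uN j z > ξ then (1 : ℝ) else 0) * g₂ (z, ξ)) ∂lam
        = M j := by
      intro j
      refine integral_congr_ae ?_
      filter_upwards [huNb j, hub] with z h1 h2
      have h1' := abs_le.mp h1
      have h2' := abs_le.mp h2
      simpa [hg₂def, hg₁def] using
        inner_int2 (R := R) (a := uN j z) (b := u z) (by linarith [h1'.1]) h1'.2
          (by linarith [h2'.1])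
    have keyu : ∫ z, (∫ ξ : ℝ, (if u z > ξ then (1 : ℝ) else 0) * g₂ (z, ξ)) ∂lam = Q := by
      refine integral_congr_ae ?_
      filter_upwards [hub] with z h2
      have h2' := abs_le.mp h2
      have : ∀ ξ : ℝ, (if u z > ξ then (1 : ℝ) else 0) * g₂ (z, ξ)
          = (if u z > ξ then (1 : ℝ) else 0) * S.indicator (fun _ => (1:ℝ)) ξ := by
        intro ξ; by_cases h : u z > ξ <;> simp [hg₂def, hg₁def, h]
      rw [show (fun ξ : ℝ => (if u z > ξ then (1 : ℝ) else 0) * g₂ (z, ξ))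
          = fun ξ : ℝ => (if u z > ξ then (1 : ℝ) else 0) * S.indicator (fun _ => (1:ℝ)) ξ
          from funext this]
      exact inner_int (by linarith [h2'.1]) h2'.2
    have := hweak g₂ hg₂int
    rwa [keyu, show (fun j => ∫ z, (∫ ξ : ℝ, (if uN j z > ξ then (1 : ℝ) else 0) *
        g₂ (z, ξ)) ∂lam) = M from funext keyj] at this
  -- key identity and L¹ convergence
  have keyA : ∀ j, ∫ z, |uN j z - u z| ∂lam = P j + Q - 2 * M j := by
    intro j
    have hcong : ∫ z, |uN j z - u z| ∂lam
        = ∫ z, ((uN j z + R) + (u z + R) - 2 * (min (uN j z) (u z) + R)) ∂lam := by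
      refine integral_congr_ae (Eventually.of_forall fun z => ?_)
      show |uN j z - u z| = (uN j z + R) + (u z + R) - 2 * (min (uN j z) (u z) + R)
      rcases le_total (uN j z) (u z) with h | h
      · rw [min_eq_left h, abs_of_nonpos (by linarith)]; ring
      · rw [min_eq_right h, abs_of_nonneg (by linarith)]; ring
    have hint1 : Integrable (fun z => (uN j z + R) + (u z + R)) lam :=
      ((intuj j).add intR).add (intu.add intR)
    have hint2 : Integrable (fun z => 2 * (min (uN j z) (u z) + R)) lam :=
      ((intmin j).add intR).const_mul 2
    have hint3 : Integrable (fun z => uN j z + R) lam := (intuj j).add intR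
    have hint4 : Integrable (fun z => u z + R) lam := intu.add intR
    rw [hcong, integral_sub hint1 hint2, integral_add hint3 hint4, integral_const_mul]
  have hA : Tendsto (fun j => ∫ z, |uN j z - u z| ∂lam) atTop (𝓝 0) := by
    have h : Tendsto (fun j => P j + Q - 2 * M j) atTop (𝓝 (Q + Q - 2 * Q)) :=
      (hw1.add_const Q).sub (hw2.const_mul 2)
    rw [show Q + Q - 2 * Q = 0 by ring] at h
    exact h.congr fun j => (keyA j).symm
  -- bound on the difference
  have hd_bdd : ∀ j, ∀ᵐ z ∂lam, |uN j z - u z| ≤ 2 * R := by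
    intro j
    filter_upwards [huNb j, hub] with z h1 h2
    have h1' := abs_le.mp h1
    have h2' := abs_le.mp h2
    rw [abs_le]; constructor <;> [linarith; linarith]
  have intd : ∀ j, Integrable (fun z => |uN j z - u z|) lam := fun j =>
    integrable_of_abs_bound ((huNm j).sub hum).abs (by
      filter_upwards [hd_bdd j] with z h; rwa [abs_abs])
  have intd2 : ∀ j, Integrable (fun z => |uN j z - u z| ^ 2) lam := fun j =>
    integrable_of_abs_bound (((huNm j).sub hum).abs.pow measurable_const) (by
      filter_upwards [hd_bdd j] with z h
      rw [abs_of_nonneg (sq_nonneg _)]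
      exact pow_le_pow_left₀ (abs_nonneg _) h 2)
  -- Conclusion 1: strong L² convergence
  have conc1 : Tendsto (fun j => ∫ z, |uN j z - u z| ^ 2 ∂lam) atTop (𝓝 0) := by
    refine squeeze_zero (fun j => integral_nonneg fun z => sq_nonneg _)
      (g := fun j => 2 * R * ∫ z, |uN j z - u z| ∂lam) (fun j => ?_) ?_
    · have hb : ∫ z, |uN j z - u z| ^ 2 ∂lam ≤ ∫ z, 2 * R * |uN j z - u z| ∂lam := by
        refine integral_mono_ae (intd2 j) ((intd j).const_mul (2 * R)) ?_
        filter_upwards [hd_bdd j] with z h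
        calc |uN j z - u z| ^ 2 = |uN j z - u z| * |uN j z - u z| := by rw [pow_two]
          _ ≤ (2 * R) * |uN j z - u z| := mul_le_mul_of_nonneg_right h (abs_nonneg _)
      rwa [integral_const_mul] at hb
    · simpa using hA.const_mul (2 * R)
  -- integrability of squares and products
  have intuj2 : ∀ j, Integrable (fun z => (uN j z) ^ 2) lam := fun j =>
    integrable_of_abs_bound ((huNm j).pow measurable_const) (by
      filter_upwards [huNb j] with z h
      calc |uN j z ^ 2| = |uN j z| ^ 2 := abs_pow _ _
        _ ≤ R ^ 2 := pow_le_pow_left₀ (abs_nonneg _) h 2)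
  have intu2 : Integrable (fun z => (u z) ^ 2) lam :=
    integrable_of_abs_bound (hum.pow measurable_const) (by
      filter_upwards [hub] with z h
      calc |u z ^ 2| = |u z| ^ 2 := abs_pow _ _
        _ ≤ R ^ 2 := pow_le_pow_left₀ (abs_nonneg _) h 2)
  -- Conclusion 3: convergence of norms
  have conc3 : Tendsto (fun j => ∫ z, (uN j z) ^ 2 ∂lam) atTop (𝓝 (∫ z, (u z) ^ 2 ∂lam)) := by
    rw [tendsto_iff_dist_tendsto_zero]
    refine squeeze_zero (fun j => dist_nonneg)
      (g := fun j => 2 * R * ∫ z, |uN j z - u z| ∂lam) (fun j => ?_) ?_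
    · rw [Real.dist_eq, ← integral_sub (intuj2 j) intu2]
      calc |∫ z, ((uN j z) ^ 2 - (u z) ^ 2) ∂lam|
          ≤ ∫ z, |(uN j z) ^ 2 - (u z) ^ 2| ∂lam := by
            simpa [Real.norm_eq_abs] using
              norm_integral_le_integral_norm (fun z => (uN j z) ^ 2 - (u z) ^ 2) (μ := lam)
        _ ≤ ∫ z, 2 * R * |uN j z - u z| ∂lam := by
            refine integral_mono_ae ((intuj2 j).sub intu2).abs ((intd j).const_mul (2 * R)) ?_
            filter_upwards [huNb j, hub, hd_bdd j] with z h1 h2 h3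
            have habs : |uN j z + u z| ≤ 2 * R := by
              have h1' := abs_le.mp h1
              have h2' := abs_le.mp h2
              rw [abs_le]; constructor <;> [linarith; linarith]
            calc |(uN j z) ^ 2 - (u z) ^ 2| = |uN j z - u z| * |uN j z + u z| := by
                  rw [← abs_mul]; ring_nf
              _ ≤ |uN j z - u z| * (2 * R) := mul_le_mul_of_nonneg_left habs (abs_nonneg _)
              _ = 2 * R * |uN j z - u z| := by ring
        _ = 2 * R * ∫ z, |uN j z - u z| ∂lam := integral_const_mul _ _
    · simpa using hA.const_mul (2 * R)
  -- Conclusion 2: weak L² convergence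
  refine ⟨conc1, fun φ hφ => ?_, conc3⟩
  have hφint : Integrable φ lam := hφ.integrable (by norm_num)
  have intujφ : ∀ j, Integrable (fun z => uN j z * φ z) lam := fun j =>
    hφint.bdd_mul (huNm j).aestronglyMeasurable
      (by simpa [Real.norm_eq_abs] using huNb j)
  have intuφ : Integrable (fun z => u z * φ z) lam :=
    hφint.bdd_mul hum.aestronglyMeasurable (by simpa [Real.norm_eq_abs] using hub)
  have hpq : Real.HolderConjugate 2 2 := Real.HolderConjugate.two_two
  set Cφ : ℝ := (∫ z, |φ z| ^ (2:ℝ) ∂lam) ^ ((1:ℝ)/2) with hCφ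
  rw [tendsto_iff_dist_tendsto_zero]
  refine squeeze_zero (fun j => dist_nonneg)
    (g := fun j => (∫ z, |uN j z - u z| ^ 2 ∂lam) ^ ((1:ℝ)/2) * Cφ) (fun j => ?_) ?_
  · have hd2 : MemLp (fun z => |uN j z - u z|) (ENNReal.ofReal 2) lam := by
      refine MemLp.of_bound (((huNm j).sub hum).abs).aestronglyMeasurable (2 * R) ?_
      filter_upwards [hd_bdd j] with z h
      simpa [Real.norm_eq_abs, abs_abs] using h
    have hφ2 : MemLp (fun z => |φ z|) (ENNReal.ofReal 2) lam := by
      have : (ENNReal.ofReal 2) = 2 := by simp [ENNReal.ofReal_ofNat]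
      rw [this]
      exact hφ.abs
    have hcs := integral_mul_le_Lp_mul_Lq_of_nonneg hpq
      (Eventually.of_forall fun z => abs_nonneg (uN j z - u z))
      (Eventually.of_forall fun z => abs_nonneg (φ z)) hd2 hφ2
    have hrpow : ∫ z, |uN j z - u z| ^ (2:ℝ) ∂lam = ∫ z, |uN j z - u z| ^ 2 ∂lam := by
      refine integral_congr_ae (Eventually.of_forall fun z => ?_)
      show |uN j z - u z| ^ (2:ℝ) = |uN j z - u z| ^ (2:ℕ)
      rw [← Real.rpow_natCast (|uN j z - u z|) 2]
      norm_num
    rw [hrpow] at hcs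
    calc dist (∫ z, uN j z * φ z ∂lam) (∫ z, u z * φ z ∂lam)
        = |∫ z, (uN j z * φ z - u z * φ z) ∂lam| := by
          rw [Real.dist_eq, integral_sub (intujφ j) intuφ]
      _ ≤ ∫ z, |uN j z * φ z - u z * φ z| ∂lam := by
          simpa [Real.norm_eq_abs] using
            norm_integral_le_integral_norm (fun z => uN j z * φ z - u z * φ z) (μ := lam)
      _ = ∫ z, |uN j z - u z| * |φ z| ∂lam := by
          refine integral_congr_ae (Eventually.of_forall fun z => ?_)
          show |uN j z * φ z - u z * φ z| = |uN j z - u z| * |φ z|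
          rw [← abs_mul]
          congr 1
          ring
      _ ≤ (∫ z, |uN j z - u z| ^ 2 ∂lam) ^ ((1:ℝ)/2) * Cφ := hcs
  · have h0 : Tendsto (fun j => (∫ z, |uN j z - u z| ^ 2 ∂lam) ^ ((1:ℝ)/2)) atTop (𝓝 0) := by
      have hcont := (Real.continuousAt_rpow_const 0 ((1:ℝ)/2) (Or.inr (by norm_num))).tendsto
      have := hcont.comp conc1
      simpa [Function.comp_def, Real.zero_rpow (by norm_num : ((1:ℝ)/2) ≠ 0)] using this
    simpa using h0.mul_const Cφ
end

section
/- Let b ∈ (0,1] and let η satisfy 0 < η ≤ (b+4) / (2(1+b)). Then sup over α ∈ [0, 1/2] of min((1/2 − α) b, α, 4α − 2 + η) equals η b / (b+4), and the supremum is attained at α = 1/2 − η/(b+4). -/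
/-- For `b ∈ (0,1]` and `0 < η ≤ (b+4)/(2(1+b))`, the supremum over
`α ∈ [0,1/2]` of `min((1/2-α)b, α, 4α - 2 + η)` equals `ηb/(b+4)` and is attained at
`α = 1/2 - η/(b+4)`. -/
theorem sup_min_indices_dim_ge_two (b η : ℝ) (hb : b ∈ Set.Ioc (0 : ℝ) 1)
    (hη : 0 < η) (hη' : η ≤ (b + 4) / (2 * (1 + b))) :
    IsGreatest
      ((fun α => min ((1 / 2 - α) * b) (min α (4 * α - 2 + η))) '' Set.Icc (0 : ℝ) (1 / 2))
      (η * b / (b + 4)) ∧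
    1 / 2 - η / (b + 4) ∈ Set.Icc (0 : ℝ) (1 / 2) ∧
    min ((1 / 2 - (1 / 2 - η / (b + 4))) * b)
        (min (1 / 2 - η / (b + 4)) (4 * (1 / 2 - η / (b + 4)) - 2 + η)) =
      η * b / (b + 4) := by
  obtain ⟨hb0, hb1⟩ := hb
  have hb4 : (0 : ℝ) < b + 4 := by linarith
  have h1b : (0 : ℝ) < 2 * (1 + b) := by linarith
  -- From hη' : 2 η (1 + b) ≤ b + 4
  have key : 2 * η * (1 + b) ≤ b + 4 := by
    have := (div_le_div_iff₀ (by norm_num : (0:ℝ) < 1) h1b).mp (by simpa using hη')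
    nlinarith [hη'.trans_eq (rfl), mul_le_mul_of_nonneg_right hη' h1b.le,
      div_mul_cancel₀ (b + 4) h1b.ne']
  have hmem : 1 / 2 - η / (b + 4) ∈ Set.Icc (0 : ℝ) (1 / 2) := by
    constructor
    · have : η / (b + 4) ≤ 1 / 2 := by
        rw [div_le_div_iff₀ hb4 (by norm_num)]
        nlinarith
      linarith
    · have : 0 < η / (b + 4) := div_pos hη hb4
      linarith
  have hval : min ((1 / 2 - (1 / 2 - η / (b + 4))) * b)
        (min (1 / 2 - η / (b + 4)) (4 * (1 / 2 - η / (b + 4)) - 2 + η)) =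
      η * b / (b + 4) := by
    have e1 : (1 / 2 - (1 / 2 - η / (b + 4))) * b = η * b / (b + 4) := by
      field_simp; ring
    have e3 : 4 * (1 / 2 - η / (b + 4)) - 2 + η = η * b / (b + 4) := by
      field_simp; ring
    have e2 : η * b / (b + 4) ≤ 1 / 2 - η / (b + 4) := by
      rw [div_le_iff₀ hb4]
      have h4 : (1 / 2 - η / (b + 4)) * (b + 4) = (b + 4) / 2 - η := by
        field_simp
      rw [h4]; nlinarith
    rw [e1, e3, min_comm (1 / 2 - η / (b + 4)), min_eq_left e2, min_self]
  refine ⟨⟨⟨1 / 2 - η / (b + 4), hmem, hval⟩, ?_⟩, hmem, hval⟩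
  rintro y ⟨α, hα, rfl⟩
  obtain ⟨hα0, hα2⟩ := hα
  simp only
  rcases le_or_gt (1 / 2 - η / (b + 4)) α with h | h
  · -- first term small
    refine le_trans (min_le_left _ _) ?_
    have h5 : 1 / 2 - α ≤ η / (b + 4) := by linarith
    calc (1 / 2 - α) * b ≤ (η / (b + 4)) * b :=
          mul_le_mul_of_nonneg_right h5 hb0.le
      _ = η * b / (b + 4) := by ring
  · -- third term small
    refine le_trans (le_trans (min_le_right _ _) (min_le_right _ _)) ?_
    have : 4 * α - 2 + η < 4 * (1 / 2 - η / (b + 4)) - 2 + η := by linarith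
    have e3 : 4 * (1 / 2 - η / (b + 4)) - 2 + η = η * b / (b + 4) := by
      field_simp; ring
    linarith
end
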